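/- Suppose Assumption 3 holds with $\theta = 1/2$ (i.e., $h$ is convex closed with quadratic growth $h(x) - h^* \ge c\, d(x,\mathcal{X}_h)^2$ and subgradients bounded by $G$ on $\mathcal{C}$). Consider the projected subgradient method with $\alpha_k = \alpha_1 k^{-1}$ where $0 < \alpha_1 \le 1/c$. Then for all $k \ge 1$, $d(x_k, \mathcal{X}_h)^2 \le \max\left\{\frac{2\alpha_1 G^2}{c},\ d(x_1, \mathcal{X}_h)^2\right\} k^{-c\alpha_1}$. -/

import Mathlib

open RealInnerProductSpace

private lemma key_ineq {t q : ℝ} (ht : 1 ≤ t) (hq0 : 0 < q) (hq1 : q ≤ 1) :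
    max 0 (1 - 2*q/t) * t ^ (-q) + q/(2*t^2) ≤ (t+1) ^ (-q) := by
  have ht0 : (0:ℝ) < t := lt_of_lt_of_le one_pos ht
  have ht1 : (0:ℝ) < t + 1 := by linarith
  have htq : (0:ℝ) < t ^ (-q) := Real.rpow_pos_of_pos ht0 _
  rcases le_or_gt (1 - 2*q/t) 0 with hA | hB
  · rw [max_eq_left hA, zero_mul, zero_add]
    have h1 : (t+1) ^ q ≤ 2*t^2 := by
      calc (t+1)^q ≤ (t+1)^(1:ℝ) :=
            Real.rpow_le_rpow_of_exponent_le (by linarith) hq1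
        _ = t+1 := Real.rpow_one _
        _ ≤ 2*t^2 := by nlinarith
    have hpos : 0 < (t+1)^q := Real.rpow_pos_of_pos ht1 q
    rw [Real.rpow_neg ht1.le, inv_eq_one_div, le_div_iff₀ hpos]
    calc q/(2*t^2) * (t+1)^q ≤ q/(2*t^2) * (2*t^2) :=
          mul_le_mul_of_nonneg_left h1 (by positivity)
      _ = q := by field_simp
      _ ≤ 1 := hq1
  · rw [max_eq_right hB.le]
    have hqt : q/t < 1/2 := by
      have h' : 2*q/t < 1 := by linarith
      rw [div_lt_iff₀ ht0] at h' ⊢; linarith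
    have h1t : (0:ℝ) < 1 + 1/t := by positivity
    have hb : (1 + 1/t)^q ≤ 1 + q/t := by
      have := rpow_one_add_le_one_add_mul_self
        (s := 1/t) (le_trans (show (-1:ℝ) ≤ 0 by norm_num) (by positivity)) hq0.le hq1
      simpa [mul_one_div, div_eq_mul_inv] using this
    have hbpos : 0 < (1+1/t)^q := Real.rpow_pos_of_pos h1t q
    have hinv : 1 - q/t ≤ (1 + 1/t)^(-q) := by
      rw [Real.rpow_neg h1t.le, inv_eq_one_div, le_div_iff₀ hbpos]
      calc (1 - q/t) * (1+1/t)^q ≤ (1 - q/t) * (1 + q/t) := by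
            apply mul_le_mul_of_nonneg_left hb (by linarith)
        _ ≤ 1 := by nlinarith [sq_nonneg (q/t)]
    have hsplit : (t+1) ^ (-q) = t^(-q) * (1+1/t)^(-q) := by
      rw [← Real.mul_rpow ht0.le h1t.le]
      congr 1
      field_simp
    have hstep : q/(2*t^2) ≤ (q/t) * t^(-q) := by
      have h2 : (1:ℝ)/(2*t) ≤ t^(-q) := by
        have h3 := Real.rpow_le_rpow_of_exponent_le ht
          (show (-1:ℝ) ≤ -q by linarith)
        rw [Real.rpow_neg_one] at h3
        calc (1:ℝ)/(2*t) ≤ 1/t := by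
              apply one_div_le_one_div_of_le ht0; linarith
          _ = t⁻¹ := one_div t
          _ ≤ t^(-q) := h3
      calc q/(2*t^2) = (q/t) * (1/(2*t)) := by ring
        _ ≤ (q/t) * t^(-q) := mul_le_mul_of_nonneg_left h2 (by positivity)
    calc (1 - 2*q/t) * t^(-q) + q/(2*t^2)
        ≤ (1 - 2*q/t) * t^(-q) + (q/t) * t^(-q) := by linarith
      _ = (1 - q/t) * t^(-q) := by ring
      _ ≤ (1+1/t)^(-q) * t^(-q) := mul_le_mul_of_nonneg_right hinv htq.le
      _ = (t+1)^(-q) := by rw [hsplit, mul_comm]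

set_option maxHeartbeats 1000000 in
theorem stmt12 {H : Type*} [NormedAddCommGroup H] [InnerProductSpace ℝ H]
    (C X : Set H) (hCconv : Convex ℝ C) (hCclosed : IsClosed C) (hCne : C.Nonempty)
    (h : H → ℝ) (hconv : ConvexOn ℝ Set.univ h)
    (hstar : ℝ) (hmin : ∀ x ∈ C, hstar ≤ h x)
    (hX : X = {x | x ∈ C ∧ h x = hstar}) (hXne : X.Nonempty)
    (c G : ℝ) (hc : 0 < c) (hG : 0 < G)
    (heb : ∀ x ∈ C, c * (Metric.infDist x X)^2 ≤ h x - hstar)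
    (P : H → H) (hPmem : ∀ x, P x ∈ C)
    (hPnonexp : ∀ x y, ‖P x - P y‖ ≤ ‖x - y‖)
    (hPid : ∀ x ∈ C, P x = x)
    (α1 : ℝ) (hα1 : 0 < α1) (hα1c : α1 ≤ 1/c)
    (x g : ℕ → H)
    (hx1 : x 1 ∈ C)
    (hg : ∀ k, ∀ y, h (x k) + ⟪g k, y - x k⟫ ≤ h y)
    (hgb : ∀ k, ‖g k‖ ≤ G)
    (hiter : ∀ k, 1 ≤ k → x (k+1) = P (x k - (α1 * (k:ℝ)⁻¹) • g k)) :
    ∀ k, 1 ≤ k →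
      (Metric.infDist (x k) X)^2 ≤
        max (2*α1*G^2/c) ((Metric.infDist (x 1) X)^2) * (k:ℝ)^(-(c*α1)) := by
  set d : ℕ → ℝ := fun k => Metric.infDist (x k) X with hd
  set q : ℝ := c * α1 with hqdef
  set M : ℝ := max (2*α1*G^2/c) ((Metric.infDist (x 1) X)^2) with hMdef
  have hq0 : 0 < q := mul_pos hc hα1
  have hq1 : q ≤ 1 := by
    have := mul_le_mul_of_nonneg_left hα1c hc.le
    rw [mul_one_div, div_self hc.ne'] at this
    exact this
  have hM0 : 0 < M := lt_of_lt_of_le (by positivity) (le_max_left _ _)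
  have hMq : α1^2*G^2 ≤ (q/2)*M := by
    have h1 : (q/2)*(2*α1*G^2/c) ≤ (q/2)*M :=
      mul_le_mul_of_nonneg_left (le_max_left _ _) (by positivity)
    have h2 : (q/2)*(2*α1*G^2/c) = α1^2*G^2 := by
      rw [hqdef]; field_simp
    linarith
  have hmemC : ∀ k, 1 ≤ k → x k ∈ C := by
    intro k hk
    induction k, hk using Nat.le_induction with
    | base => exact hx1
    | succ n hn ih => rw [hiter n hn]; exact hPmem _
  -- The one-step recursion
  have hrec : ∀ k : ℕ, 1 ≤ k →
      d (k+1) ^ 2 ≤ max 0 (1 - 2*q/(k:ℝ)) * d k ^ 2 + α1^2*G^2/(k:ℝ)^2 := by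
    intro k hk
    have hk0 : (0:ℝ) < k := by exact_mod_cast hk
    set α : ℝ := α1 * (k:ℝ)⁻¹ with hα
    have hαpos : 0 < α := by positivity
    have hg2 : ‖g k‖^2 ≤ G^2 := by nlinarith [norm_nonneg (g k), hgb k]
    have hkey : ∀ y ∈ X, d (k+1)^2 + (2*α*c*(d k)^2 - α^2*G^2) ≤ dist (x k) y ^ 2 := by
      intro y hy
      have hyC : y ∈ C := by rw [hX] at hy; exact hy.1
      have hyh : h y = hstar := by rw [hX] at hy; exact hy.2
      have h1 : d (k+1) ≤ ‖x (k+1) - y‖ := by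
        rw [← dist_eq_norm]; exact Metric.infDist_le_dist_of_mem hy
      have h2 : ‖x (k+1) - y‖ ≤ ‖(x k - y) - α • g k‖ := by
        rw [hiter k hk]
        calc ‖P (x k - α • g k) - y‖ = ‖P (x k - α • g k) - P y‖ := by
              rw [hPid y hyC]
          _ ≤ ‖(x k - α • g k) - y‖ := hPnonexp _ _
          _ = ‖(x k - y) - α • g k‖ := by congr 1; abel
      have hsub : c * (d k)^2 ≤ ⟪g k, x k - y⟫ := by
        have hg' := hg k y
        have heb' := heb (x k) (hmemC k hk)
        have hin : ⟪g k, y - x k⟫ = -⟪g k, x k - y⟫ := by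
          rw [show y - x k = -(x k - y) by abel, inner_neg_right]
        rw [hin, hyh] at hg'
        simp only [hd] at heb' ⊢
        linarith
      have hexp : ‖(x k - y) - α • g k‖^2
          = ‖x k - y‖^2 - 2*α*⟪g k, x k - y⟫ + α^2*‖g k‖^2 := by
        rw [norm_sub_sq_real, real_inner_smul_right, real_inner_comm, norm_smul,
          Real.norm_eq_abs, mul_pow, sq_abs]
        ring
      have hA := pow_le_pow_left₀ Metric.infDist_nonneg (h1.trans h2) 2
      rw [hexp] at hA
      have hB := mul_le_mul_of_nonneg_left hsub hαpos.le
      have hC := mul_le_mul_of_nonneg_left hg2 (sq_nonneg α)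
      rw [dist_eq_norm]
      simp only [hd] at hA ⊢
      nlinarith
    have hmain : d (k+1)^2 + (2*α*c*(d k)^2 - α^2*G^2) ≤ (d k)^2 := by
      set E := d (k+1)^2 + (2*α*c*(d k)^2 - α^2*G^2) with hE
      rcases le_or_gt E 0 with hE0 | hE0
      · exact hE0.trans (sq_nonneg _)
      · have hsq : Real.sqrt E ≤ d k := by
          by_contra hcon
          push_neg at hcon
          have : Metric.infDist (x k) X < Real.sqrt E := hcon
          obtain ⟨y, hy, hdy⟩ := (Metric.infDist_lt_iff hXne).mp this
          have h1 := hkey y hy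
          have h2 : dist (x k) y ^ 2 < Real.sqrt E ^ 2 := by
            apply pow_lt_pow_left₀ hdy dist_nonneg
            norm_num
          rw [Real.sq_sqrt hE0.le] at h2
          linarith
        calc E = Real.sqrt E ^ 2 := (Real.sq_sqrt hE0.le).symm
          _ ≤ d k ^ 2 := pow_le_pow_left₀ (Real.sqrt_nonneg _) hsq 2
    have hcoef : 1 - 2*c*α = 1 - 2*q/(k:ℝ) := by
      rw [hα, hqdef]; field_simp
    have hα2 : α^2*G^2 = α1^2*G^2/(k:ℝ)^2 := by
      rw [hα]; field_simp
    rcases le_total 0 (1 - 2*q/(k:ℝ)) with hco | hco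
    · rw [max_eq_right hco, ← hcoef, ← hα2]
      have hx2 : (1 - 2*c*α) * d k ^2 = d k ^2 - 2*c*α*(d k ^2) := by ring
      linarith [hmain, hx2]
    · rw [max_eq_left hco, zero_mul, zero_add, ← hα2]
      have hneg : (1 - 2*c*α) ≤ 0 := by rw [hcoef]; exact hco
      have hx3 : (1 - 2*c*α) * d k ^2 ≤ 0 :=
        mul_nonpos_of_nonpos_of_nonneg hneg (sq_nonneg _)
      linarith [hmain, hx3]
  -- Main induction
  intro k hk
  induction k, hk using Nat.le_induction with
  | base =>
    have : ((1:ℕ):ℝ) ^ (-q) = 1 := by rw [Nat.cast_one, Real.one_rpow]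
    rw [this, mul_one]
    exact le_max_right _ _
  | succ n hn ih =>
    have hn1 : (1:ℝ) ≤ (n:ℝ) := by exact_mod_cast hn
    have hn0 : (0:ℝ) < (n:ℝ) := by linarith
    have hkey := key_ineq hn1 hq0 hq1
    have hrecn := hrec n hn
    have hmax0 : (0:ℝ) ≤ max 0 (1 - 2*q/(n:ℝ)) := le_max_left _ _
    have step1 : max 0 (1 - 2*q/(n:ℝ)) * d n ^ 2
        ≤ max 0 (1 - 2*q/(n:ℝ)) * (M * (n:ℝ)^(-q)) :=
      mul_le_mul_of_nonneg_left ih hmax0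
    have step2 : α1^2*G^2/(n:ℝ)^2 ≤ (q/2)*M/(n:ℝ)^2 := by
      apply div_le_div_of_nonneg_right hMq (by positivity) |>.trans_eq rfl
    have step3 : M * (max 0 (1 - 2*q/(n:ℝ)) * (n:ℝ)^(-q) + q/(2*(n:ℝ)^2))
        ≤ M * ((n:ℝ)+1)^(-q) := mul_le_mul_of_nonneg_left hkey hM0.le
    have hcast : (((n+1):ℕ):ℝ) = (n:ℝ) + 1 := by push_cast; ring
    rw [hcast]
    calc d (n+1) ^ 2
        ≤ max 0 (1 - 2*q/(n:ℝ)) * d n ^ 2 + α1^2*G^2/(n:ℝ)^2 := hrecn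
      _ ≤ max 0 (1 - 2*q/(n:ℝ)) * (M * (n:ℝ)^(-q)) + (q/2)*M/(n:ℝ)^2 := by
          linarith
      _ = M * (max 0 (1 - 2*q/(n:ℝ)) * (n:ℝ)^(-q) + q/(2*(n:ℝ)^2)) := by ring
      _ ≤ M * ((n:ℝ)+1)^(-q) := step3
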